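/- Let p > 1 and k ≥ 1 be integers and let b = b_{p,pk+1} be the sequence of successive gaps of the exponents of the Alexander polynomial of T_{p,pk+1}, i.e. b_i = a_{i-1} - a_i where (t^{p(pk+1)}-1)(t-1)/((t^p-1)(t^{pk+1}-1)) = \sum_{i=0}^{2n}(-1)^i t^{a_i} with a_0 > ... > a_{2n}. Then b is the concatenation, for j = 1, ..., p-1, of k copies of the pair (j, p-j). -/

import Mathlib

open Polynomial Finset

/-- The exponent sequence of the Alexander polynomial of `T(p, pk+1)`. -/
def aTorus (p k i : ℕ) : ℕ :=
  p * (k * (p - 1) - i / 2) - (i % 2) * (i / (2 * k) + 1)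

lemma aTorus_even (p k m : ℕ) : aTorus p k (2 * m) = p * (k * (p - 1) - m) := by
  simp [aTorus, Nat.mul_div_cancel_left _ (by norm_num : 0 < 2), Nat.mul_mod_right]

lemma div_two_k (k m r : ℕ) (hk : 0 < k) (hr : r < 2) :
    (2 * m + r) / (2 * k) = m / k := by
  obtain ⟨j, v, hv, rfl⟩ : ∃ j v, v < k ∧ m = k * j + v :=
    ⟨m / k, m % k, Nat.mod_lt _ hk, by rw [Nat.div_add_mod]⟩
  rw [show 2 * (k * j + v) + r = (2 * v + r) + (2 * k) * j by ring,
    Nat.add_mul_div_left _ _ (by omega : 0 < 2 * k),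
    Nat.div_eq_of_lt (by omega : 2 * v + r < 2 * k),
    show k * j + v = v + k * j by ring,
    Nat.add_mul_div_left _ _ hk, Nat.div_eq_of_lt hv]

lemma aTorus_odd' (p k m : ℕ) (hk : 0 < k) :
    aTorus p k (2 * m + 1) = p * (k * (p - 1) - m) - (m / k + 1) := by
  simp [aTorus, div_two_k k m 1 hk one_lt_two,
    (by omega : (2 * m + 1) / 2 = m), (by omega : (2 * m + 1) % 2 = 1)]

lemma aTorus_odd (p k j v : ℕ) (hj : j + 1 < p) (hv : v < k) :
    aTorus p k (2 * (k * j + v) + 1)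
      = p * (k - (v + 1)) + p * k * (p - 2 - j) + (p - 1 - j) := by
  rw [aTorus_odd' p k _ (by omega),
    show k * j + v = v + k * j by ring, Nat.add_mul_div_left _ _ (by omega : 0 < k),
    Nat.div_eq_of_lt hv]
  obtain ⟨J, rfl⟩ : ∃ J, p = j + 2 + J := ⟨p - (j + 2), by omega⟩
  obtain ⟨V, rfl⟩ : ∃ V, k = v + 1 + V := ⟨k - (v + 1), by omega⟩
  have e1 : j + 2 + J - 1 = j + 1 + J := by omega
  have e2 : j + 2 + J - 2 - j = J := by omega
  have e3 : j + 1 + J - j = 1 + J := by omega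
  have e4 : v + 1 + V - (v + 1) = V := by omega
  rw [e1, e2, e3, e4]
  rw [show (v + 1 + V) * (j + 1 + J) = (v + (v + 1 + V) * j) + (1 + V + (v + 1 + V) * J) by ring,
    Nat.add_sub_cancel_left]
  rw [show (j + 2 + J) * (1 + V + (v + 1 + V) * J)
      = (0 + j + 1) + ((j + 2 + J) * V + (j + 2 + J) * (v + 1 + V) * J + (1 + J)) by ring,
    Nat.add_sub_cancel_left]

lemma sum_range_two_mul {M : Type*} [AddCommMonoid M] (n : ℕ) (f : ℕ → M) :
    ∑ i ∈ Finset.range (2 * n), f i = ∑ m ∈ Finset.range n, (f (2 * m) + f (2 * m + 1)) := by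
  induction n with
  | zero => simp
  | succ n ih =>
      rw [show 2 * (n + 1) = 2 * n + 1 + 1 by ring, Finset.sum_range_succ, Finset.sum_range_succ,
        ih, Finset.sum_range_succ, add_assoc]

lemma sum_range_mul {M : Type*} [AddCommMonoid M] (k s : ℕ) (f : ℕ → M) :
    ∑ i ∈ Finset.range (k * s), f i
      = ∑ j ∈ Finset.range s, ∑ v ∈ Finset.range k, f (k * j + v) := by
  induction s with
  | zero => simp
  | succ s ih =>
      rw [show k * (s + 1) = k * s + k by ring, Finset.sum_range_add, ih,
        Finset.sum_range_succ]

lemma poly_id (p k : ℕ) (hp : 1 < p) (hk : 1 ≤ k) :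
    ((X : Polynomial ℤ) ^ (p * (p * k + 1)) - 1) * (X - 1) =
      ((X : Polynomial ℤ) ^ p - 1) * ((X : Polynomial ℤ) ^ (p * k + 1) - 1) *
        ∑ i ∈ Finset.range (2 * (k * (p - 1)) + 1), (-1 : Polynomial ℤ) ^ i * X ^ (aTorus p k i) := by
  have hq : ∀ m : ℕ, ((X : Polynomial ℤ) ^ (p * k + 1)) ^ m = X ^ (m * (p * k + 1)) := by
    intro m; rw [← pow_mul, Nat.mul_comm]
  have hgeom : (X : Polynomial ℤ) ^ (p * (p * k + 1)) - 1
      = (∑ m ∈ Finset.range p, (X : Polynomial ℤ) ^ (m * (p * k + 1)))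
          * ((X : Polynomial ℤ) ^ (p * k + 1) - 1) := by
    have h := geom_sum_mul ((X : Polynomial ℤ) ^ (p * k + 1)) p
    simp only [hq] at h
    exact h.symm
  -- the key identity
  have h1 : ∑ i ∈ Finset.range (2 * (k * (p - 1)) + 1), (-1 : Polynomial ℤ) ^ i * X ^ (aTorus p k i)
      = (∑ m ∈ Finset.range (k * (p - 1)),
          ((X : Polynomial ℤ) ^ (aTorus p k (2 * m)) - X ^ (aTorus p k (2 * m + 1)))) + 1 := by
    rw [Finset.sum_range_succ, sum_range_two_mul]
    congr 1
    · refine Finset.sum_congr rfl fun m _ => ?_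
      have h2 : ((-1 : Polynomial ℤ)) ^ (2 * m) = 1 := by rw [pow_mul]; norm_num
      have h3 : ((-1 : Polynomial ℤ)) ^ (2 * m + 1) = -1 := by rw [pow_succ, h2]; ring
      rw [h2, h3]; ring
    · rw [show aTorus p k (2 * (k * (p - 1))) = 0 by simp [aTorus_even], pow_mul]
      norm_num
  have h2 : ((X : Polynomial ℤ) ^ p - 1) * (∑ m ∈ Finset.range (k * (p - 1)),
        ((X : Polynomial ℤ) ^ (aTorus p k (2 * m)) - X ^ (aTorus p k (2 * m + 1))))
      = (∑ m ∈ Finset.range (k * (p - 1)),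
          ((X : Polynomial ℤ) ^ (aTorus p k (2 * m) + p) - X ^ (aTorus p k (2 * m))))
        - (∑ m ∈ Finset.range (k * (p - 1)),
          ((X : Polynomial ℤ) ^ (aTorus p k (2 * m + 1) + p) - X ^ (aTorus p k (2 * m + 1)))) := by
    rw [Finset.mul_sum, ← Finset.sum_sub_distrib]
    refine Finset.sum_congr rfl fun m _ => ?_
    rw [pow_add, pow_add]; ring
  have hA : ∑ m ∈ Finset.range (k * (p - 1)),
        ((X : Polynomial ℤ) ^ (aTorus p k (2 * m) + p) - X ^ (aTorus p k (2 * m)))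
      = X ^ ((p - 1) * (p * k + 1) + 1) - X ^ p := by
    have key : ∀ m ∈ Finset.range (k * (p - 1)),
        (X : Polynomial ℤ) ^ (aTorus p k (2 * m) + p) - X ^ (aTorus p k (2 * m))
          = (fun m => (X : Polynomial ℤ) ^ (p * (k * (p - 1) - m) + p)) m
            - (fun m => (X : Polynomial ℤ) ^ (p * (k * (p - 1) - m) + p)) (m + 1) := by
      intro m hm
      simp only [Finset.mem_range] at hm
      simp only []
      rw [aTorus_even]
      congr 2
      rw [show k * (p - 1) - m = k * (p - 1) - (m + 1) + 1 by omega]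
      ring
    rw [Finset.sum_congr rfl key,
      Finset.sum_range_sub' (fun m => (X : Polynomial ℤ) ^ (p * (k * (p - 1) - m) + p))]
    simp only [Nat.sub_zero, Nat.sub_self, Nat.mul_zero, Nat.zero_add]
    congr 2
    obtain ⟨P, rfl⟩ : ∃ P, p = P + 1 := ⟨p - 1, by omega⟩
    simp only [Nat.add_sub_cancel]
    ring
  have hB : ∑ m ∈ Finset.range (k * (p - 1)),
        ((X : Polynomial ℤ) ^ (aTorus p k (2 * m + 1) + p) - X ^ (aTorus p k (2 * m + 1)))
      = ∑ j ∈ Finset.range (p - 1),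
          ((X : Polynomial ℤ) ^ ((p - 1 - j) * (p * k + 1))
            - X ^ ((p - 2 - j) * (p * k + 1) + 1)) := by
    rw [sum_range_mul]
    refine Finset.sum_congr rfl fun j hj => ?_
    simp only [Finset.mem_range] at hj
    have hj' : j + 1 < p := by omega
    have key : ∀ v ∈ Finset.range k,
        (X : Polynomial ℤ) ^ (aTorus p k (2 * (k * j + v) + 1) + p)
            - X ^ (aTorus p k (2 * (k * j + v) + 1))
          = (fun v => (X : Polynomial ℤ) ^ (p * (k - v) + p * k * (p - 2 - j) + (p - 1 - j))) v
            - (fun v => (X : Polynomial ℤ) ^ (p * (k - v) + p * k * (p - 2 - j) + (p - 1 - j)))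
                (v + 1) := by
      intro v hv
      simp only [Finset.mem_range] at hv
      simp only []
      rw [aTorus_odd p k j v hj' hv]
      congr 2
      rw [show k - v = k - (v + 1) + 1 by omega]
      ring
    rw [Finset.sum_congr rfl key,
      Finset.sum_range_sub'
        (fun v => (X : Polynomial ℤ) ^ (p * (k - v) + p * k * (p - 2 - j) + (p - 1 - j)))]
    simp only [Nat.sub_zero, Nat.sub_self, Nat.mul_zero, Nat.zero_add]
    obtain ⟨J, rfl⟩ : ∃ J, p = j + 2 + J := ⟨p - (j + 2), by omega⟩
    rw [show j + 2 + J - 2 - j = J by omega, show j + 2 + J - 1 - j = 1 + J by omega]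
    congr 2
    · ring
    · ring
  have hBsplit : ∑ j ∈ Finset.range (p - 1),
        ((X : Polynomial ℤ) ^ ((p - 1 - j) * (p * k + 1)) - X ^ ((p - 2 - j) * (p * k + 1) + 1))
      = (∑ j ∈ Finset.range (p - 1), (X : Polynomial ℤ) ^ ((p - 1 - j) * (p * k + 1)))
        - ∑ j ∈ Finset.range (p - 1), (X : Polynomial ℤ) ^ ((p - 2 - j) * (p * k + 1) + 1) :=
    Finset.sum_sub_distrib _ _
  have hC : ∑ j ∈ Finset.range (p - 1), (X : Polynomial ℤ) ^ ((p - 1 - j) * (p * k + 1))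
      = ∑ j ∈ Finset.range (p - 1), (X : Polynomial ℤ) ^ ((j + 1) * (p * k + 1)) := by
    rw [← Finset.sum_range_reflect (fun j => (X : Polynomial ℤ) ^ ((j + 1) * (p * k + 1))) (p - 1)]
    refine Finset.sum_congr rfl fun j hj => ?_
    simp only [Finset.mem_range] at hj
    congr 2
    omega
  have hD : ∑ j ∈ Finset.range (p - 1), (X : Polynomial ℤ) ^ ((p - 2 - j) * (p * k + 1) + 1)
      = ∑ j ∈ Finset.range (p - 1), (X : Polynomial ℤ) ^ (j * (p * k + 1) + 1) := by
    rw [← Finset.sum_range_reflect (fun j => (X : Polynomial ℤ) ^ (j * (p * k + 1) + 1)) (p - 1)]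
    refine Finset.sum_congr rfl fun j hj => ?_
    simp only [Finset.mem_range] at hj
    congr 3
  have h5 : ∑ m ∈ Finset.range p, (X : Polynomial ℤ) ^ (m * (p * k + 1) + 1)
      = (∑ j ∈ Finset.range (p - 1), (X : Polynomial ℤ) ^ (j * (p * k + 1) + 1))
        + X ^ ((p - 1) * (p * k + 1) + 1) := by
    rw [show Finset.range p = Finset.range (p - 1 + 1) by congr 1; omega]
    exact Finset.sum_range_succ _ _
  have h6 : ∑ m ∈ Finset.range p, (X : Polynomial ℤ) ^ (m * (p * k + 1))
      = (∑ j ∈ Finset.range (p - 1), (X : Polynomial ℤ) ^ ((j + 1) * (p * k + 1))) + 1 := by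
    rw [show Finset.range p = Finset.range (p - 1 + 1) by congr 1; omega, Finset.sum_range_succ']
    norm_num
  have h7 : (X : Polynomial ℤ) * ∑ m ∈ Finset.range p, (X : Polynomial ℤ) ^ (m * (p * k + 1))
      = ∑ m ∈ Finset.range p, (X : Polynomial ℤ) ^ (m * (p * k + 1) + 1) := by
    rw [Finset.mul_sum]
    refine Finset.sum_congr rfl fun m _ => ?_
    rw [pow_succ]; ring
  linear_combination (X - 1) * hgeom
    - ((X : Polynomial ℤ) ^ (p * k + 1) - 1)
        * (((X : Polynomial ℤ) ^ p - 1) * h1 + h2 + hA - hB - hBsplit - hC + hD - h7 - h5 + h6)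

lemma aTorus_succ_lt (p k i : ℕ) (hp : 1 < p) (hk : 1 ≤ k) (hi : i < 2 * (k * (p - 1))) :
    aTorus p k (i + 1) < aTorus p k i := by
  obtain ⟨m, hm | hm⟩ := Nat.even_or_odd' i
  · -- i = 2m
    subst hm
    rw [show 2 * m + 1 = 2 * m + 1 from rfl, aTorus_odd' p k m (by omega), aTorus_even]
    have hmN : m < k * (p - 1) := by omega
    have hpos : 0 < p * (k * (p - 1) - m) :=
      Nat.mul_pos (by omega) (by omega)
    generalize hG : p * (k * (p - 1) - m) = A at hpos ⊢
    generalize hd : m / k = c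
    omega
  · -- i = 2m + 1
    subst hm
    rw [show 2 * m + 1 + 1 = 2 * (m + 1) by ring, aTorus_even, aTorus_odd' p k m (by omega)]
    have hmN : m < k * (p - 1) := by omega
    have hdiv : m / k < p - 1 := Nat.div_lt_of_lt_mul hmN
    have hstep : p * (k * (p - 1) - m) = p * (k * (p - 1) - (m + 1)) + p := by
      rw [show k * (p - 1) - m = k * (p - 1) - (m + 1) + 1 by omega]; ring
    generalize hG1 : p * (k * (p - 1) - (m + 1)) = A at hstep ⊢
    generalize hG2 : p * (k * (p - 1) - m) = B at hstep ⊢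
    generalize hd : m / k = c at hdiv ⊢
    omega

lemma aTorus_gap (p k i : ℕ) (hp : 1 < p) (hk : 1 ≤ k) (h1 : 1 ≤ i)
    (h2 : i ≤ 2 * (k * (p - 1))) :
    aTorus p k (i - 1) - aTorus p k i =
      if (i - 1) % 2 = 0 then (i - 1) / (2 * k) + 1
      else p - ((i - 1) / (2 * k) + 1) := by
  obtain ⟨m, hm | hm⟩ := Nat.even_or_odd' (i - 1)
  · -- i = 2m + 1
    have hi : i = 2 * m + 1 := by omega
    subst hi
    rw [show 2 * m + 1 - 1 = 2 * m from rfl]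
    rw [if_pos (Nat.mul_mod_right 2 m), aTorus_even, aTorus_odd' p k m (by omega),
      show 2 * m = 2 * m + 0 from rfl, div_two_k k m 0 (by omega) (by omega)]
    have hmN : m < k * (p - 1) := by omega
    have hdiv : m / k < p - 1 := Nat.div_lt_of_lt_mul hmN
    have hple : p ≤ p * (k * (p - 1) - m) := Nat.le_mul_of_pos_right p (by omega)
    generalize hG : p * (k * (p - 1) - m) = A at hple ⊢
    generalize hd : m / k = c at hdiv ⊢
    omega
  · -- i = 2m + 2
    have hi : i = 2 * m + 2 := by omega
    subst hi
    rw [show 2 * m + 2 - 1 = 2 * m + 1 from rfl]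
    rw [if_neg (by omega), aTorus_odd' p k m (by omega),
      show 2 * m + 2 = 2 * (m + 1) by ring, aTorus_even,
      div_two_k k m 1 (by omega) (by omega)]
    have hmN : m < k * (p - 1) := by omega
    have hdiv : m / k < p - 1 := Nat.div_lt_of_lt_mul hmN
    have hstep : p * (k * (p - 1) - m) = p * (k * (p - 1) - (m + 1)) + p := by
      rw [show k * (p - 1) - m = k * (p - 1) - (m + 1) + 1 by omega]; ring
    generalize hG1 : p * (k * (p - 1) - (m + 1)) = A at hstep ⊢
    generalize hG2 : p * (k * (p - 1) - m) = B at hstep ⊢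
    generalize hd : m / k = c at hdiv ⊢
    omega

theorem gap_sequence_torus_pk1 (p k : ℕ) (hp : 1 < p) (hk : 1 ≤ k) :
    ∃ a : ℕ → ℕ,
      (∀ i j, i < j → j ≤ 2 * (k * (p - 1)) → a j < a i) ∧
      a 0 = (p - 1) * (p * k) ∧
      a (2 * (k * (p - 1))) = 0 ∧
      ((X : Polynomial ℤ) ^ (p * (p * k + 1)) - 1) * (X - 1) =
        ((X : Polynomial ℤ) ^ p - 1) * ((X : Polynomial ℤ) ^ (p * k + 1) - 1) *
          ∑ i ∈ Finset.range (2 * (k * (p - 1)) + 1), (-1 : Polynomial ℤ) ^ i * X ^ (a i) ∧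
      ∀ i, 1 ≤ i → i ≤ 2 * (k * (p - 1)) →
        a (i - 1) - a i =
          if (i - 1) % 2 = 0 then (i - 1) / (2 * k) + 1
          else p - ((i - 1) / (2 * k) + 1) := by
  refine ⟨aTorus p k, ?_, ?_, ?_, poly_id p k hp hk, fun i h1 h2 => aTorus_gap p k i hp hk h1 h2⟩
  · intro i j hij hj
    induction j with
    | zero => omega
    | succ j ih =>
        rcases Nat.lt_or_ge i j with h | h
        · exact lt_trans (aTorus_succ_lt p k j hp hk (by omega)) (ih h (by omega))
        · have : i = j := by omega
          subst this
          exact aTorus_succ_lt p k i hp hk (by omega)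
  · rw [show (0 : ℕ) = 2 * 0 from rfl, aTorus_even]
    obtain ⟨P, rfl⟩ : ∃ P, p = P + 1 := ⟨p - 1, by omega⟩
    simp only [Nat.add_sub_cancel, Nat.sub_zero]
    ring
  · rw [show 2 * (k * (p - 1)) = 2 * (k * (p - 1)) from rfl, aTorus_even, Nat.sub_self,
      Nat.mul_zero]
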